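/- Fix a real s > 1. For N ≥ 1, let x_k = k/N for k = 0, 1, ..., N-1 be equally spaced points on the circle ℝ/ℤ (with the arc-length metric d(x,y) = min_{m ∈ ℤ} |x - y - m|), and let y_N = 1/(2N). Then lim_{N→∞} N^{-s} · ∑_{k=0}^{N-1} d(y_N, x_k)^{-s} = 2(2^s - 1)·ζ(s). -/

import Mathlib

open Filter

set_option maxHeartbeats 1000000

section Aux

variable (s : ℝ)

private lemma normAC (x : ℝ) (h1 : |x| ≤ 1 / 2) : ‖(x : AddCircle (1 : ℝ))‖ = |x| := by
  rw [AddCircle.norm_coe_eq_abs_iff (p := (1 : ℝ)) one_ne_zero]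
  simpa using h1

/-- The odd-denominator terms. -/
private noncomputable def gOdd (j : ℕ) : ℝ := ((2 * (j : ℝ) + 1)) ^ (-s)

private lemma summable_gOdd (hs : 1 < s) : Summable (gOdd s) := by
  have hZ : Summable (fun n : ℕ => (n : ℝ) ^ (-s)) :=
    Real.summable_nat_rpow.mpr (by linarith)
  have := hZ.comp_injective (i := fun j : ℕ => 2 * j + 1)
    (fun a b hab => by have h2 : 2 * a + 1 = 2 * b + 1 := hab; omega)
  refine this.congr fun j => ?_
  simp only [Function.comp, gOdd]
  push_cast
  ring_nf

end Aux

/-- The key exact evaluation of the sum for each `N ≥ 1`. -/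
private lemma sum_eval (s : ℝ) (N : ℕ) (hN : 1 ≤ N) :
    (∑ k ∈ Finset.range N,
        ‖((1 / (2 * (N : ℝ)) : ℝ) : AddCircle (1 : ℝ)) -
          (((k : ℝ) / (N : ℝ) : ℝ) : AddCircle (1 : ℝ))‖ ^ (-s) : ℝ)
      = ∑ j ∈ Finset.range (N / 2), ((2 * (j : ℝ) + 1) / (2 * N)) ^ (-s)
        + ∑ j ∈ Finset.range (N - N / 2), ((2 * (j : ℝ) + 1) / (2 * N)) ^ (-s) := by
  have hN0 : (0 : ℝ) < N := by exact_mod_cast hN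
  set h := N / 2 with hh
  have hhN : h + 1 ≤ N := by omega
  -- the summand as a function of k
  set f : ℕ → ℝ := fun k =>
    ‖((1 / (2 * (N : ℝ)) : ℝ) : AddCircle (1 : ℝ)) -
      (((k : ℝ) / (N : ℝ) : ℝ) : AddCircle (1 : ℝ))‖ ^ (-s) with hf
  set q : ℕ → ℝ := fun j => ((2 * (j : ℝ) + 1) / (2 * N)) ^ (-s) with hq
  have key : ∀ k : ℕ, ‖((1 / (2 * (N : ℝ)) : ℝ) : AddCircle (1 : ℝ)) -
      (((k : ℝ) / (N : ℝ) : ℝ) : AddCircle (1 : ℝ))‖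
      = ‖(((1 - 2 * (k : ℝ)) / (2 * N) : ℝ) : AddCircle (1 : ℝ))‖ := by
    intro k
    have hx : (1 / (2 * (N : ℝ)) - (k : ℝ) / (N : ℝ)) = (1 - 2 * (k : ℝ)) / (2 * N) := by
      field_simp
    have e1 : ((1 / (2 * (N : ℝ)) : ℝ) : AddCircle (1 : ℝ)) -
        (((k : ℝ) / (N : ℝ) : ℝ) : AddCircle (1 : ℝ))
        = (((1 / (2 * (N : ℝ)) - (k : ℝ) / (N : ℝ) : ℝ)) : AddCircle (1 : ℝ)) :=
      (QuotientAddGroup.mk_sub _ _ _).symm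
    rw [e1, hx]
  -- norm for small k : k ≤ h
  have norm_small : ∀ k : ℕ, k ≤ h →
      ‖(((1 - 2 * (k : ℝ)) / (2 * N) : ℝ) : AddCircle (1 : ℝ))‖
        = |1 - 2 * (k : ℝ)| / (2 * N) := by
    intro k hk
    have h2k : 2 * k ≤ N := by omega
    have h2k' : (2 * (k : ℝ)) ≤ N := by exact_mod_cast h2k
    have habs : |(1 - 2 * (k : ℝ)) / (2 * N)| ≤ 1 / 2 := by
      rw [abs_div, abs_of_pos (by linarith : (0:ℝ) < 2 * N)]
      rw [div_le_div_iff₀ (by linarith) (by norm_num)]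
      have : |1 - 2 * (k : ℝ)| ≤ N := by
        rcases abs_cases (1 - 2 * (k : ℝ)) with ⟨he, _⟩ | ⟨he, _⟩ <;> rw [he]
        · have : (1:ℝ) ≤ N := by exact_mod_cast hN
          nlinarith [Nat.cast_nonneg (α := ℝ) k]
        · linarith
      linarith
    rw [normAC _ habs, abs_div, abs_of_pos (by linarith : (0:ℝ) < 2 * N)]
  -- norm for large k : h + 1 ≤ k < N
  have norm_large : ∀ k : ℕ, h + 1 ≤ k → k < N →
      ‖(((1 - 2 * (k : ℝ)) / (2 * N) : ℝ) : AddCircle (1 : ℝ))‖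
        = (2 * ((N : ℝ) - k) + 1) / (2 * N) := by
    intro k hk1 hk2
    have h2k : N + 1 ≤ 2 * k := by omega
    have h2k' : (N : ℝ) + 1 ≤ 2 * k := by exact_mod_cast h2k
    have hkN : (k : ℝ) < N := by exact_mod_cast hk2
    have hshift : (((1 - 2 * (k : ℝ)) / (2 * N) : ℝ) : AddCircle (1 : ℝ))
        = (((2 * ((N : ℝ) - k) + 1) / (2 * N) : ℝ) : AddCircle (1 : ℝ)) := by
      have : ((2 * ((N : ℝ) - k) + 1) / (2 * N) : ℝ)
          = (1 - 2 * (k : ℝ)) / (2 * N) + 1 := by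
        field_simp
        ring
      rw [this]
      have hmem : ((1 - 2 * (k : ℝ)) / (2 * N) + 1) - ((1 - 2 * (k : ℝ)) / (2 * N))
          ∈ AddSubgroup.zmultiples (1 : ℝ) := by
        simpa using AddSubgroup.mem_zmultiples (1 : ℝ)
      exact ((QuotientAddGroup.eq_iff_sub_mem).mpr hmem).symm
    rw [hshift]
    have hpos : (0 : ℝ) < 2 * ((N : ℝ) - k) + 1 := by linarith
    have habs : |(2 * ((N : ℝ) - k) + 1) / (2 * N)| ≤ 1 / 2 := by
      rw [abs_div, abs_of_pos hpos, abs_of_pos (by linarith : (0:ℝ) < 2 * N)]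
      rw [div_le_div_iff₀ (by linarith) (by norm_num)]
      linarith
    rw [normAC _ habs, abs_div, abs_of_pos hpos,
      abs_of_pos (by linarith : (0:ℝ) < 2 * N)]
  -- split the sum
  have hsplit : ∑ k ∈ Finset.range N, f k
      = ∑ k ∈ Finset.Ico 0 (h + 1), f k + ∑ k ∈ Finset.Ico (h + 1) N, f k := by
    rw [Finset.range_eq_Ico]
    exact (Finset.sum_Ico_consecutive f (Nat.zero_le (h + 1)) hhN).symm
  have part1 : ∑ k ∈ Finset.Ico 0 (h + 1), f k = q 0 + ∑ j ∈ Finset.range h, q j := by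
    rw [← Finset.range_eq_Ico, Finset.sum_range_succ']
    have h0 : f 0 = q 0 := by
      simp only [hf, hq, key 0]
      rw [norm_small 0 (Nat.zero_le _)]
      norm_num
    have hj : ∀ j ∈ Finset.range h, f (j + 1) = q j := by
      intro j hj
      simp only [Finset.mem_range] at hj
      simp only [hf, hq, key (j + 1)]
      rw [norm_small (j + 1) (by omega)]
      congr 2
      push_cast
      rw [abs_of_nonpos (by linarith [Nat.cast_nonneg (α := ℝ) j])]
      ring
    rw [h0, Finset.sum_congr rfl hj, add_comm]
  have part2 : ∑ k ∈ Finset.Ico (h + 1) N, f k = ∑ i ∈ Finset.Ico 1 (N - h), q i := by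
    refine Finset.sum_nbij' (fun k => N - k) (fun i => N - i) ?_ ?_ ?_ ?_ ?_
    · intro k hk; simp only [Finset.mem_Ico] at *; omega
    · intro i hi; simp only [Finset.mem_Ico] at *; omega
    · intro k hk; simp only [Finset.mem_Ico] at hk; omega
    · intro i hi; simp only [Finset.mem_Ico] at hi; omega
    · intro k hk
      simp only [Finset.mem_Ico] at hk
      simp only [hf, hq, key k]
      rw [norm_large k hk.1 hk.2]
      congr 2
      have : ((N - k : ℕ) : ℝ) = (N : ℝ) - k := by
        have := hk.2; push_cast [Nat.cast_sub (le_of_lt hk.2)]; ring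
      rw [this]
  have part2' : q 0 + ∑ i ∈ Finset.Ico 1 (N - h), q i
      = ∑ i ∈ Finset.range (N - h), q i := by
    rw [Finset.range_eq_Ico, ← Finset.sum_eq_sum_Ico_succ_bot (by omega : 0 < N - h) q]
  rw [hsplit, part1, part2, ← part2']
  ring

private lemma sum_eval' (s : ℝ) (hs : 0 < s) (N : ℕ) (hN : 1 ≤ N) :
    ((N : ℝ) ^ (-s) *
      ∑ k ∈ Finset.range N,
        ‖((1 / (2 * (N : ℝ)) : ℝ) : AddCircle (1 : ℝ)) -
          (((k : ℝ) / (N : ℝ) : ℝ) : AddCircle (1 : ℝ))‖ ^ (-s) : ℝ)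
      = 2 ^ s * (∑ j ∈ Finset.range (N / 2), gOdd s j
          + ∑ j ∈ Finset.range (N - N / 2), gOdd s j) := by
  have hN0 : (0 : ℝ) < N := by exact_mod_cast hN
  rw [sum_eval s N hN]
  have hterm : ∀ j : ℕ, ((2 * (j : ℝ) + 1) / (2 * N)) ^ (-s)
      = gOdd s j * ((2 * (N : ℝ)) ^ s) := by
    intro j
    have h1 : (0:ℝ) ≤ 2 * (j : ℝ) + 1 := by positivity
    rw [Real.div_rpow h1 (by positivity), Real.rpow_neg (by positivity : (0:ℝ) ≤ 2 * (N:ℝ)),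
      gOdd, div_eq_mul_inv, inv_inv]
  simp only [hterm]
  rw [← Finset.sum_mul, ← Finset.sum_mul, ← add_mul]
  rw [Real.mul_rpow (by norm_num) (le_of_lt hN0), Real.rpow_neg (le_of_lt hN0)]
  have hNs : (0:ℝ) < (N:ℝ) ^ s := Real.rpow_pos_of_pos hN0 s
  field_simp

theorem polarization_circle_limit (s : ℝ) (hs : 1 < s) :
    Tendsto (fun N : ℕ =>
        (((N : ℝ) ^ (-s) *
          ∑ k ∈ Finset.range N,
            ‖((1 / (2 * (N : ℝ)) : ℝ) : AddCircle (1 : ℝ)) -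
              (((k : ℝ) / (N : ℝ) : ℝ) : AddCircle (1 : ℝ))‖ ^ (-s) : ℝ) : ℂ))
      atTop (nhds (((2 * ((2 : ℝ) ^ s - 1) : ℝ) : ℂ) * riemannZeta (s : ℂ))) := by
  have hsum := summable_gOdd s hs
  set T : ℝ := ∑' j, gOdd s j with hT
  -- the real-valued limit
  have hd : Tendsto (fun N : ℕ => N / 2) atTop atTop :=
    tendsto_atTop_atTop.mpr fun b => ⟨2 * b, fun a ha => by omega⟩
  have hd' : Tendsto (fun N : ℕ => N - N / 2) atTop atTop :=
    tendsto_atTop_atTop.mpr fun b => ⟨2 * b, fun a ha => by omega⟩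
  have hP : Tendsto (fun n : ℕ => ∑ j ∈ Finset.range n, gOdd s j) atTop (nhds T) :=
    hsum.hasSum.tendsto_sum_nat
  have hreal : Tendsto (fun N : ℕ =>
      2 ^ s * (∑ j ∈ Finset.range (N / 2), gOdd s j
        + ∑ j ∈ Finset.range (N - N / 2), gOdd s j)) atTop
      (nhds (2 ^ s * (T + T))) :=
    (((hP.comp hd).add (hP.comp hd')).const_mul _)
  have hreal' : Tendsto (fun N : ℕ =>
      ((N : ℝ) ^ (-s) *
        ∑ k ∈ Finset.range N,
          ‖((1 / (2 * (N : ℝ)) : ℝ) : AddCircle (1 : ℝ)) -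
            (((k : ℝ) / (N : ℝ) : ℝ) : AddCircle (1 : ℝ))‖ ^ (-s) : ℝ)) atTop
      (nhds (2 ^ s * (T + T))) := by
    refine hreal.congr' ?_
    filter_upwards [eventually_ge_atTop 1] with N hN
    exact (sum_eval' s (by linarith) N hN).symm
  -- identify the limit with the zeta value
  have hZsum : Summable (fun n : ℕ => (n : ℝ) ^ (-s)) :=
    Real.summable_nat_rpow.mpr (by linarith)
  set Z : ℝ := ∑' n : ℕ, (n : ℝ) ^ (-s) with hZ
  have heven : Summable (fun k : ℕ => (((2 * k : ℕ) : ℝ)) ^ (-s)) :=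
    hZsum.comp_injective (i := fun k : ℕ => 2 * k)
      (fun a b hab => by have h2 : 2 * a = 2 * b := hab; omega)
  have hodd : Summable (fun k : ℕ => (((2 * k + 1 : ℕ) : ℝ)) ^ (-s)) :=
    hZsum.comp_injective (i := fun k : ℕ => 2 * k + 1)
      (fun a b hab => by have h2 : 2 * a + 1 = 2 * b + 1 := hab; omega)
  have hTZ : T = (1 - 2 ^ (-s)) * Z := by
    have hsplit := tsum_even_add_odd (f := fun n : ℕ => (n : ℝ) ^ (-s)) heven hodd
    have he : (∑' k : ℕ, (((2 * k : ℕ) : ℝ)) ^ (-s)) = 2 ^ (-s) * Z := by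
      rw [hZ, ← Summable.tsum_mul_left _ hZsum]
      congr 1; funext k
      push_cast
      rw [Real.mul_rpow (by norm_num) (Nat.cast_nonneg k)]
    have ho : (∑' k : ℕ, ((2 * k + 1 : ℕ) : ℝ) ^ (-s)) = T := by
      rw [hT]; congr 1; funext k; congr 1; push_cast; ring
    rw [he, ho] at hsplit
    linarith [hsplit]
  have hzeta : ((Z : ℝ) : ℂ) = riemannZeta (s : ℂ) := by
    rw [zeta_eq_tsum_one_div_nat_cpow (by simpa using hs)]
    rw [hZ, Complex.ofReal_tsum]
    congr 1; funext n
    rw [Complex.ofReal_cpow (Nat.cast_nonneg n)]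
    push_cast
    rw [Complex.cpow_neg, one_div]
  -- conclude
  have h2 : (2:ℝ) ^ s * (2:ℝ) ^ (-s) = 1 := by
    rw [← Real.rpow_add (by norm_num)]; simp
  have hfinal : (2:ℝ) ^ s * (T + T) = 2 * ((2:ℝ) ^ s - 1) * Z := by
    have expand : (2:ℝ) ^ s * ((1 - 2 ^ (-s)) * Z + (1 - 2 ^ (-s)) * Z)
        = 2 * ((2:ℝ) ^ s - (2:ℝ) ^ s * (2:ℝ) ^ (-s)) * Z := by ring
    rw [hTZ, expand, h2]
  have := (Complex.continuous_ofReal.tendsto _).comp hreal'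
  convert this using 2
  · rfl
  rw [hfinal, ← hzeta]
  push_cast
  ring
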